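/- If X is a Hausdorff topological space, then |X| ≤ 2^{aL_c(X)·wt(X)·ψ_c(X)}. -/

import Mathlib

open Cardinal Set Topology
universe u
noncomputable section

/-- The tightness of a space: the least infinite cardinal `τ` such that whenever
`y ∈ closure A` there is `B ⊆ A` with `#B ≤ τ` and `y ∈ closure B`. -/
def tightness (Y : Type u) [TopologicalSpace Y] : Cardinal.{u} :=
  sInf {τ : Cardinal.{u} | ℵ₀ ≤ τ ∧ ∀ (A : Set Y) (y : Y), y ∈ closure A →
    ∃ B ⊆ A, #B ≤ τ ∧ y ∈ closure B}

/-- The `μ`-closure of a set `A`: the union of the closures of all subsets of `A`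
of cardinality at most `μ`. -/
def kClosure {X : Type u} [TopologicalSpace X] (μ : Cardinal.{u}) (A : Set X) : Set X :=
  ⋃ B ∈ {B : Set X | B ⊆ A ∧ #B ≤ μ}, closure B

/-- `𝒞` witnesses that the weak tightness of `X` is at most `κ`. -/
def IsWeakTightnessWitness (X : Type u) [TopologicalSpace X] (κ : Cardinal.{u})
    (𝒞 : Set (Set X)) : Prop :=
  ⋃₀ 𝒞 = Set.univ ∧ #𝒞 ≤ 2 ^ κ ∧ ∀ C ∈ 𝒞, tightness C ≤ κ ∧ kClosure (2 ^ κ) C = Set.univ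

/-- The weak tightness of `X`: the least infinite cardinal `κ` for which there is a
cover `𝒞` of `X` with `#𝒞 ≤ 2^κ` such that each `C ∈ 𝒞` has tightness at most `κ`
and `X = cl_{2^κ} C`. -/
def weakTightness (X : Type u) [TopologicalSpace X] : Cardinal.{u} :=
  sInf {κ : Cardinal.{u} | ℵ₀ ≤ κ ∧ ∃ 𝒞 : Set (Set X), IsWeakTightnessWitness X κ 𝒞}

/-- The π-character of a point `x`: the least cardinality of a family of nonempty
open sets such that every neighborhood of `x` contains a member of the family. -/
def piCharacterAt {X : Type u} [TopologicalSpace X] (x : X) : Cardinal.{u} :=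
  sInf {c : Cardinal.{u} | ∃ 𝒰 : Set (Set X), #𝒰 = c ∧
    (∀ U ∈ 𝒰, IsOpen U ∧ U.Nonempty) ∧ ∀ N ∈ nhds x, ∃ U ∈ 𝒰, U ⊆ N}

/-- The π-character of a space: the supremum of the π-characters at its points
(at least `ℵ₀`). -/
def piCharacter (X : Type u) [TopologicalSpace X] : Cardinal.{u} :=
  max ℵ₀ (⨆ x : X, piCharacterAt x)

/-- The Lindelöf degree: the least infinite cardinal `κ` such that every open cover
has a subcover of cardinality at most `κ`. -/
def lindelofDegree (X : Type u) [TopologicalSpace X] : Cardinal.{u} :=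
  sInf {κ : Cardinal.{u} | ℵ₀ ≤ κ ∧ ∀ 𝒰 : Set (Set X), (∀ U ∈ 𝒰, IsOpen U) →
    ⋃₀ 𝒰 = Set.univ → ∃ 𝒱 ⊆ 𝒰, #𝒱 ≤ κ ∧ ⋃₀ 𝒱 = Set.univ}

/-- The density of `X`: the least infinite cardinality of a dense subset. -/
def density (X : Type u) [TopologicalSpace X] : Cardinal.{u} :=
  sInf {c : Cardinal.{u} | ℵ₀ ≤ c ∧ ∃ D : Set X, Dense D ∧ #D ≤ c}

/-- The pseudocharacter of a subset `F` of `X`: the least infinite cardinality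
of a family of open sets whose intersection is `F`. -/
def setPseudoCharacter {X : Type u} [TopologicalSpace X] (F : Set X) : Cardinal.{u} :=
  sInf {κ : Cardinal.{u} | ℵ₀ ≤ κ ∧ ∃ 𝒰 : Set (Set X), #𝒰 ≤ κ ∧
    (∀ U ∈ 𝒰, IsOpen U) ∧ ⋂₀ 𝒰 = F}

/-- The pseudocharacter of a space: the least infinite `κ` such that every singleton
is the intersection of at most `κ` open sets. -/
def pseudoCharacter (X : Type u) [TopologicalSpace X] : Cardinal.{u} :=
  sInf {κ : Cardinal.{u} | ℵ₀ ≤ κ ∧ ∀ x : X, ∃ 𝒰 : Set (Set X), #𝒰 ≤ κ ∧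
    (∀ U ∈ 𝒰, IsOpen U) ∧ ⋂₀ 𝒰 = {x}}

/-- The character of a (closed) set `G` in `X`: the least infinite cardinality of a
family `𝒰` of open sets containing `G` such that every open set containing `G`
contains a member of `𝒰`. -/
def setCharacter {X : Type u} [TopologicalSpace X] (G : Set X) : Cardinal.{u} :=
  sInf {κ : Cardinal.{u} | ℵ₀ ≤ κ ∧ ∃ 𝒰 : Set (Set X), #𝒰 ≤ κ ∧
    (∀ U ∈ 𝒰, IsOpen U ∧ G ⊆ U) ∧ ∀ V : Set X, IsOpen V → G ⊆ V → ∃ U ∈ 𝒰, U ⊆ V}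

/-- A cardinal `λ` is a caliber of `X` if every `λ`-indexed family of nonempty open
sets has a subfamily of cardinality `λ` with nonempty intersection. -/
def IsCaliber (X : Type u) [TopologicalSpace X] (lam : Cardinal.{u}) : Prop :=
  ∀ (ι : Type u) (U : ι → Set X), #ι = lam → (∀ i, IsOpen (U i) ∧ (U i).Nonempty) →
    ∃ J : Set ι, #J = lam ∧ (⋂ i ∈ J, U i).Nonempty

/-- A space is quasiregular if every nonempty open set contains the closure of a
nonempty open set. -/
def Quasiregular (X : Type u) [TopologicalSpace X] : Prop :=
  ∀ U : Set X, IsOpen U → U.Nonempty → ∃ V : Set X, IsOpen V ∧ V.Nonempty ∧ closure V ⊆ U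

/-- The θ-closure of a set `A`. -/
def thetaClosure {X : Type u} [TopologicalSpace X] (A : Set X) : Set X :=
  {x : X | ∀ U : Set X, IsOpen U → x ∈ U → (closure U ∩ A).Nonempty}

/-- The θ-density of `X`: the least infinite cardinality of a θ-dense subset. -/
def thetaDensity (X : Type u) [TopologicalSpace X] : Cardinal.{u} :=
  sInf {c : Cardinal.{u} | ℵ₀ ≤ c ∧ ∃ D : Set X, thetaClosure D = Set.univ ∧ #D ≤ c}

/-- The linear Lindelöf degree: the least infinite cardinal `κ` such that every open
cover totally ordered by inclusion has a subcover of cardinality at most `κ`. -/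
def linearLindelofDegree (X : Type u) [TopologicalSpace X] : Cardinal.{u} :=
  sInf {κ : Cardinal.{u} | ℵ₀ ≤ κ ∧ ∀ 𝒰 : Set (Set X), (∀ U ∈ 𝒰, IsOpen U) →
    IsChain (· ⊆ ·) 𝒰 → ⋃₀ 𝒰 = Set.univ → ∃ 𝒱 ⊆ 𝒰, #𝒱 ≤ κ ∧ ⋃₀ 𝒱 = Set.univ}

/-- The almost Lindelöf degree with respect to closed sets. -/
def almostLindelofDegreeClosed (X : Type u) [TopologicalSpace X] : Cardinal.{u} :=
  sInf {κ : Cardinal.{u} | ℵ₀ ≤ κ ∧ ∀ (F : Set X) (𝒱 : Set (Set X)), IsClosed F →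
    (∀ V ∈ 𝒱, IsOpen V) → F ⊆ ⋃₀ 𝒱 →
    ∃ 𝒱' ⊆ 𝒱, #𝒱' ≤ κ ∧ F ⊆ ⋃ V ∈ 𝒱', closure V}

/-- The closed pseudocharacter of a space. -/
def closedPseudoCharacter (X : Type u) [TopologicalSpace X] : Cardinal.{u} :=
  sInf {κ : Cardinal.{u} | ℵ₀ ≤ κ ∧ ∀ x : X, ∃ 𝒰 : Set (Set X), #𝒰 ≤ κ ∧
    (∀ U ∈ 𝒰, IsOpen U ∧ x ∈ U) ∧ ⋂ U ∈ 𝒰, closure U = {x}}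


lemma myCardIUnionLe {X ι : Type u} {g : ι → Set X} {c : Cardinal.{u}}
    (h : ∀ i, #(g i) ≤ c) : #(⋃ i, g i) ≤ #ι * c :=
  mk_iUnion_le_sum_mk.trans ((sum_le_sum _ _ h).trans_eq (sum_const' _ _))

lemma myMemClosureInter {X : Type u} [TopologicalSpace X] {B W : Set X} {y : X}
    (hy : y ∈ closure B) (hW : IsOpen W) (hyW : y ∈ W) : y ∈ closure (W ∩ B) := by
  rw [mem_closure_iff] at hy ⊢
  intro O hO hyO
  have := hy (O ∩ W) (hO.inter hW) ⟨hyO, hyW⟩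
  obtain ⟨z, ⟨hzO, hzW⟩, hzB⟩ := this
  exact ⟨z, hzO, hzW, hzB⟩

-- closure cardinality lemma
lemma myClosureCard {X : Type u} [TopologicalSpace X] (κ : Cardinal.{u}) (hκ : ℵ₀ ≤ κ)
    (𝒰 : X → Set (Set X)) (h𝒰card : ∀ x, #(𝒰 x) ≤ κ)
    (h𝒰open : ∀ x, ∀ U ∈ 𝒰 x, IsOpen U ∧ x ∈ U)
    (h𝒰int : ∀ x, ⋂ U ∈ 𝒰 x, closure U = {x})
    (h𝒰ne : ∀ x, (𝒰 x).Nonempty)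
    (B : Set X) (hB : #B ≤ κ) : #(closure B) ≤ 2 ^ κ := by
  -- enumerations of 𝒰 x
  have henum : ∀ x : X, ∃ f : κ.out → Set X, range f = 𝒰 x := by
    intro x
    have h1 : #(𝒰 x) ≤ #(κ.out) := by rw [mk_out]; exact h𝒰card x
    obtain ⟨e⟩ := Cardinal.le_def _ _ |>.mp h1
    have : Nonempty (𝒰 x) := (h𝒰ne x).to_subtype
    refine ⟨Subtype.val ∘ Function.invFun e, ?_⟩
    apply subset_antisymm
    · rintro _ ⟨k, rfl⟩; exact (Function.invFun e k).2
    · intro U hU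
      refine ⟨e ⟨U, hU⟩, ?_⟩
      simp [Function.leftInverse_invFun e.injective ⟨U, hU⟩]
  choose f hf using henum
  set Φ : closure B → (κ.out → Set B) :=
    fun x k => {b : B | (b : X) ∈ f x k} with hΦ
  have hinj : Function.Injective Φ := by
    intro x y hxy
    ext
    by_contra hne
    -- find U ∈ 𝒰 x with y ∉ closure U
    have hyx : (y : X) ∉ ({(x : X)} : Set X) := by simpa using fun h => hne h.symm
    rw [← h𝒰int (x : X)] at hyx
    simp only [mem_iInter, not_forall] at hyx
    obtain ⟨U, hU, hyU⟩ := hyx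
    obtain ⟨k, hk⟩ : ∃ k, f x k = U := by rw [← hf (x:X)] at hU; exact hU
    -- W := f y k ∈ 𝒰 y
    have hW : f (y : X) k ∈ 𝒰 (y : X) := by rw [← hf (y:X)]; exact ⟨k, rfl⟩
    have hWy : (y : X) ∈ closure (f (y:X) k ∩ B) :=
      myMemClosureInter y.2 (h𝒰open _ _ hW).1 (h𝒰open _ _ hW).2
    have hsets : f (x:X) k ∩ B = f (y:X) k ∩ B := by
      ext z
      constructor
      · rintro ⟨h1, h2⟩
        have : (⟨z, h2⟩ : B) ∈ Φ x k := h1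
        rw [hxy] at this
        exact ⟨this, h2⟩
      · rintro ⟨h1, h2⟩
        have : (⟨z, h2⟩ : B) ∈ Φ y k := h1
        rw [← hxy] at this
        exact ⟨this, h2⟩
    apply hyU
    rw [← hk]
    exact closure_mono inter_subset_left (hsets ▸ hWy)
  calc #(closure B) ≤ #(κ.out → Set B) := mk_le_of_injective hinj
    _ = (2 ^ #B) ^ κ := by rw [mk_arrow, mk_set, mk_out]; simp
    _ ≤ (2 ^ κ) ^ κ := power_le_power_right (power_le_power_left two_ne_zero hB)
    _ = 2 ^ κ := by rw [← power_mul, mul_eq_self hκ]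

def myPrev {X : Type u} (A : Ordinal.{u} → Set X) (x₀ : X) (o : Ordinal.{u}) : Set X :=
  insert x₀ (⋃ i : o.ToType, A (((Ordinal.ToType.mk (o := o))).symm i).1)

def myChain {X : Type u} (F : Set X → Set X) (x₀ : X) (o : Ordinal.{u}) : Set X :=
  F (insert x₀ (⋃ i : o.ToType, myChain F x₀ (((Ordinal.ToType.mk (o := o))).symm i).1))
termination_by o
decreasing_by exact (((Ordinal.ToType.mk (o := o))).symm i).2

lemma myChain_eq {X : Type u} (F : Set X → Set X) (x₀ : X) (o : Ordinal.{u}) :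
    myChain F x₀ o = F (myPrev (myChain F x₀) x₀ o) := by
  rw [myChain, myPrev]

lemma mem_myPrev {X : Type u} (A : Ordinal.{u} → Set X) (x₀ : X) {o' o : Ordinal.{u}}
    (h : o' < o) : A o' ⊆ myPrev A x₀ o := by
  intro z hz
  refine Or.inr (mem_iUnion.2 ⟨(Ordinal.ToType.mk (o := o)) ⟨o', h⟩, ?_⟩)
  rwa [OrderIso.symm_apply_apply]
lemma myStep {X : Type u} [TopologicalSpace X] (κ : Cardinal.{u}) (hκ : ℵ₀ ≤ κ)
    (𝒰 : X → Set (Set X)) (h𝒰card : ∀ x, #(𝒰 x) ≤ κ)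
    (hcl : ∀ B : Set X, #B ≤ κ → #(closure B) ≤ 2 ^ κ)
    (𝒞 : Set (Set X)) (h𝒞card : #𝒞 ≤ 2 ^ κ)
    (h𝒞dense : ∀ C ∈ 𝒞, ∀ x : X, ∃ B, B ⊆ C ∧ #B ≤ 2 ^ κ ∧ x ∈ closure B) :
    ∀ S : Set X, ∃ T : Set X, S ⊆ T ∧ (#S ≤ 2 ^ κ →
      #T ≤ 2 ^ κ ∧
      (∀ B : Set X, B ⊆ S → #B ≤ κ → closure B ⊆ T) ∧
      (∀ a ∈ S, ∀ C ∈ 𝒞, a ∈ closure (T ∩ C)) ∧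
      (∀ 𝒱 : Set (Set X), 𝒱 ⊆ (⋃ y ∈ S, 𝒰 y) → #𝒱 ≤ κ →
        ((⋃ V ∈ 𝒱, closure V)ᶜ).Nonempty → (T ∩ (⋃ V ∈ 𝒱, closure V)ᶜ).Nonempty)) := by
  have h2inf : ℵ₀ ≤ 2 ^ κ := hκ.trans (cantor κ).le
  have h2κ : κ ≤ 2 ^ κ := (cantor κ).le
  intro S
  by_cases hS : #S ≤ 2 ^ κ
  swap
  · exact ⟨S, subset_rfl, fun h => absurd h hS⟩
  choose Bsel hBsub hBcard hBmem using h𝒞dense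
  classical
  set W : Set (Set X) := ⋃ y ∈ S, 𝒰 y with hW
  set 𝒢 : Set (Set (Set X)) :=
    {𝒱 : Set (Set X) | 𝒱 ⊆ W ∧ #𝒱 ≤ κ ∧ ((⋃ V ∈ 𝒱, closure V)ᶜ).Nonempty} with h𝒢
  have hptex : ∀ 𝒱 : 𝒢, ∃ p : X, p ∈ (⋃ V ∈ (𝒱 : Set (Set X)), closure V)ᶜ :=
    fun 𝒱 => 𝒱.2.2.2
  choose pt hpt using hptex
  set Ta : Set X := ⋃ B : {B : Set X // B ⊆ S ∧ #B ≤ κ}, closure B.1 with hTa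
  set Tb : Set X := ⋃ a : S, ⋃ C : 𝒞, Bsel C.1 C.2 a.1 with hTb
  set Tc : Set X := range pt with hTc
  refine ⟨S ∪ Ta ∪ Tb ∪ Tc, fun x hx => Or.inl (Or.inl (Or.inl hx)), fun _ => ?_⟩
  have hmax : max #S ℵ₀ ≤ 2 ^ κ := max_le hS h2inf
  have hsubc : #{B : Set X // B ⊆ S ∧ #B ≤ κ} ≤ 2 ^ κ := by
    refine (mk_bounded_subset_le S κ).trans ?_
    calc (max #S ℵ₀) ^ κ ≤ (2 ^ κ) ^ κ := power_le_power_right hmax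
      _ = 2 ^ κ := by rw [← power_mul, mul_eq_self hκ]
  have hTacard : #Ta ≤ 2 ^ κ := by
    refine (myCardIUnionLe (fun B : {B : Set X // B ⊆ S ∧ #B ≤ κ} => hcl B.1 B.2.2)).trans ?_
    calc #{B : Set X // B ⊆ S ∧ #B ≤ κ} * 2 ^ κ ≤ 2 ^ κ * 2 ^ κ :=
          mul_le_mul_left hsubc _
      _ = 2 ^ κ := mul_eq_self h2inf
  have hTbcard : #Tb ≤ 2 ^ κ := by
    have hin : ∀ a : S, #(⋃ C : 𝒞, Bsel C.1 C.2 a.1) ≤ 2 ^ κ := by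
      intro a
      refine (myCardIUnionLe (fun C : 𝒞 => hBcard C.1 C.2 a.1)).trans ?_
      calc #𝒞 * 2 ^ κ ≤ 2 ^ κ * 2 ^ κ := mul_le_mul_left h𝒞card _
        _ = 2 ^ κ := mul_eq_self h2inf
    refine (myCardIUnionLe hin).trans ?_
    calc #S * 2 ^ κ ≤ 2 ^ κ * 2 ^ κ := mul_le_mul_left hS _
      _ = 2 ^ κ := mul_eq_self h2inf
  have hWcard : #W ≤ 2 ^ κ := by
    rw [hW, biUnion_eq_iUnion]
    refine (myCardIUnionLe (fun y : S => h𝒰card y.1)).trans ?_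
    calc #S * κ ≤ 2 ^ κ * 2 ^ κ := mul_le_mul' hS h2κ
      _ = 2 ^ κ := mul_eq_self h2inf
  have hTccard : #Tc ≤ 2 ^ κ := by
    refine mk_range_le.trans ?_
    have : #𝒢 ≤ #{t : Set (Set X) // t ⊆ W ∧ #t ≤ κ} := by
      refine mk_le_mk_of_subset (fun t ht => ?_)
      exact ⟨ht.1, ht.2.1⟩
    refine this.trans ((mk_bounded_subset_le W κ).trans ?_)
    calc (max #W ℵ₀) ^ κ ≤ (2 ^ κ) ^ κ := power_le_power_right (max_le hWcard h2inf)
      _ = 2 ^ κ := by rw [← power_mul, mul_eq_self hκ]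
  refine ⟨?_, ?_, ?_, ?_⟩
  · calc #(S ∪ Ta ∪ Tb ∪ Tc : Set X) ≤ #(S ∪ Ta ∪ Tb : Set X) + #Tc := mk_union_le _ _
      _ ≤ (#(S ∪ Ta : Set X) + #Tb) + #Tc := add_le_add_left (mk_union_le _ _) _
      _ ≤ ((#S + #Ta) + #Tb) + #Tc := by gcongr <;> exact mk_union_le _ _
      _ ≤ ((2 ^ κ + 2 ^ κ) + 2 ^ κ) + 2 ^ κ := by gcongr
      _ = 2 ^ κ := by
          simp [add_eq_self h2inf]
  · intro B hBS hBκ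
    intro z hz
    exact Or.inl (Or.inl (Or.inr (mem_iUnion.2 ⟨⟨B, hBS, hBκ⟩, hz⟩)))
  · intro a ha C hC
    have h1 : Bsel C hC a ⊆ (S ∪ Ta ∪ Tb ∪ Tc) ∩ C := by
      intro z hz
      refine ⟨Or.inl (Or.inr ?_), hBsub C hC a hz⟩
      exact mem_iUnion.2 ⟨⟨a, ha⟩, mem_iUnion.2 ⟨⟨C, hC⟩, hz⟩⟩
    exact closure_mono h1 (hBmem C hC a)
  · intro 𝒱 h𝒱W h𝒱κ hne
    have h𝒱𝒢 : 𝒱 ∈ 𝒢 := ⟨h𝒱W, h𝒱κ, hne⟩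
    exact ⟨pt ⟨𝒱, h𝒱𝒢⟩, Or.inr ⟨⟨𝒱, h𝒱𝒢⟩, rfl⟩, hpt ⟨𝒱, h𝒱𝒢⟩⟩

theorem myMain {X : Type u} [TopologicalSpace X] [T2Space X] [Nonempty X]
    (κ : Cardinal.{u}) (hκ : ℵ₀ ≤ κ)
    (𝒰 : X → Set (Set X)) (h𝒰card : ∀ x, #(𝒰 x) ≤ κ)
    (h𝒰open : ∀ x, ∀ U ∈ 𝒰 x, IsOpen U ∧ x ∈ U)
    (h𝒰int : ∀ x, ⋂ U ∈ 𝒰 x, closure U = {x})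
    (h𝒰ne : ∀ x, (𝒰 x).Nonempty)
    (𝒞 : Set (Set X)) (h𝒞cover : ⋃₀ 𝒞 = Set.univ) (h𝒞card : #𝒞 ≤ 2 ^ κ)
    (h𝒞t : ∀ C ∈ 𝒞, ∀ A : Set X, A ⊆ C → ∀ y ∈ C, y ∈ closure A →
      ∃ B, B ⊆ A ∧ #B ≤ κ ∧ y ∈ closure B)
    (h𝒞dense : ∀ C ∈ 𝒞, ∀ x : X, ∃ B, B ⊆ C ∧ #B ≤ 2 ^ κ ∧ x ∈ closure B)
    (haL : ∀ (F : Set X) (𝒱 : Set (Set X)), IsClosed F → (∀ V ∈ 𝒱, IsOpen V) →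
      F ⊆ ⋃₀ 𝒱 → ∃ 𝒱' ⊆ 𝒱, #𝒱' ≤ κ ∧ F ⊆ ⋃ V ∈ 𝒱', closure V) :
    #X ≤ 2 ^ κ := by
  classical
  have h2inf : ℵ₀ ≤ 2 ^ κ := hκ.trans (cantor κ).le
  have hcl := myClosureCard κ hκ 𝒰 h𝒰card h𝒰open h𝒰int h𝒰ne
  choose F hF using myStep κ hκ 𝒰 h𝒰card hcl 𝒞 h𝒞card h𝒞dense
  obtain ⟨x₀⟩ := ‹Nonempty X›
  set Λ : Ordinal.{u} := (Order.succ κ).ord with hΛ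
  set A : Ordinal.{u} → Set X := myChain F x₀ with hA
  have hchain : ∀ o, A o = F (myPrev A x₀ o) := fun o => myChain_eq F x₀ o
  have hprev_sub : ∀ o, myPrev A x₀ o ⊆ A o := by
    intro o; rw [hchain o]; exact (hF _).1
  have hmono : ∀ {o' o : Ordinal.{u}}, o' ≤ o → A o' ⊆ A o := by
    intro o' o h
    rcases eq_or_lt_of_le h with rfl | h
    · exact subset_rfl
    · exact (mem_myPrev A x₀ h).trans (hprev_sub o)
  have hcardlim : ∀ o, o.card ≤ κ → #(myPrev A x₀ o) ≤ 2 ^ κ → #(A o) ≤ 2 ^ κ := by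
    intro o _ hp; rw [hchain o]; exact ((hF _).2 hp).1
  have hcards : ∀ o : Ordinal.{u}, o < Λ → #(myPrev A x₀ o) ≤ 2 ^ κ ∧ #(A o) ≤ 2 ^ κ := by
    intro o
    induction o using Ordinal.induction with
    | h o IH =>
      intro ho
      have hocard : o.card ≤ κ := by
        have := Cardinal.lt_ord.mp ho
        exact Order.lt_succ_iff.mp this
      have hprevcard : #(myPrev A x₀ o) ≤ 2 ^ κ := by
        have hun0 : ∀ i : o.ToType, #(A (((Ordinal.ToType.mk (o := o))).symm i).1) ≤ 2 ^ κ :=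
          fun i => (IH _ (((Ordinal.ToType.mk (o := o))).symm i).2
              ((((Ordinal.ToType.mk (o := o))).symm i).2.trans ho)).2
        have hun : #(⋃ i : o.ToType, A (((Ordinal.ToType.mk (o := o))).symm i).1) ≤ 2 ^ κ := by
          refine (myCardIUnionLe hun0).trans ?_
          rw [Cardinal.mk_toType]
          calc o.card * 2 ^ κ ≤ 2 ^ κ * 2 ^ κ :=
                mul_le_mul_left (hocard.trans (cantor κ).le) _
            _ = 2 ^ κ := mul_eq_self h2inf
        calc #(myPrev A x₀ o) ≤ #(⋃ i : o.ToType, A (((Ordinal.ToType.mk (o := o))).symm i).1) + 1 :=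
              mk_insert_le
          _ ≤ 2 ^ κ + 1 := add_le_add_left hun _
          _ = 2 ^ κ := add_one_eq h2inf
      exact ⟨hprevcard, hcardlim o hocard hprevcard⟩
  set AA : Set X := ⋃ i : Λ.ToType, A (((Ordinal.ToType.mk (o := Λ))).symm i).1 with hAA
  have hA_sub_AA : ∀ o < Λ, A o ⊆ AA := by
    intro o ho z hz
    refine mem_iUnion.2 ⟨(Ordinal.ToType.mk (o := Λ)) ⟨o, ho⟩, ?_⟩
    rwa [OrderIso.symm_apply_apply]
  have hAAcard : #AA ≤ 2 ^ κ := by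
    refine (myCardIUnionLe (fun i : Λ.ToType =>
      (hcards _ (((Ordinal.ToType.mk (o := Λ))).symm i).2).2)).trans ?_
    rw [Cardinal.mk_toType, hΛ, Cardinal.card_ord]
    calc Order.succ κ * 2 ^ κ ≤ 2 ^ κ * 2 ^ κ :=
          mul_le_mul_left (Order.succ_le_of_lt (cantor κ)) _
      _ = 2 ^ κ := mul_eq_self h2inf
  have hsucc_lt : ∀ o < Λ, o + 1 < Λ := by
    intro o ho
    rw [hΛ, Cardinal.lt_ord] at ho ⊢
    rw [Ordinal.add_one_eq_succ, Ordinal.card_succ]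
    calc o.card + 1 ≤ κ + 1 := add_le_add_left (Order.lt_succ_iff.mp ho) _
      _ = κ := add_one_eq hκ
      _ < Order.succ κ := Order.lt_succ κ
  have hbound : ∀ (ι : Type u), #ι ≤ κ → ∀ g : ι → X, (∀ i, g i ∈ AA) →
      ∃ o, o < Λ ∧ ∀ i, g i ∈ A o := by
    intro ι hι g hg
    have : ∀ i : ι, ∃ o : Ordinal.{u}, o < Λ ∧ g i ∈ A o := by
      intro i
      obtain ⟨j, hj⟩ := mem_iUnion.1 (hg i)
      exact ⟨_, (((Ordinal.ToType.mk (o := Λ))).symm j).2, hj⟩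
    choose os hos1 hos2 using this
    refine ⟨iSup os, ?_, fun i => hmono (Ordinal.le_iSup os i) (hos2 i)⟩
    rw [hΛ]
    exact Cardinal.iSup_lt_ord_of_isRegular (isRegular_succ hκ)
      (hι.trans_lt (Order.lt_succ κ)) (fun i => hos1 i)
  -- stage successor helper
  have hstage : ∀ o < Λ, A o ⊆ myPrev A x₀ (o + 1) ∧ #(myPrev A x₀ (o + 1)) ≤ 2 ^ κ ∧
      A (o + 1) ⊆ AA := by
    intro o ho
    have h1 : o < o + 1 := lt_add_one o
    exact ⟨mem_myPrev A x₀ h1, (hcards _ (hsucc_lt o ho)).1, hA_sub_AA _ (hsucc_lt o ho)⟩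
  have hAA_a : ∀ B : Set X, B ⊆ AA → #B ≤ κ → closure B ⊆ AA := by
    intro B hBAA hBκ
    obtain ⟨o, ho, hBo⟩ := hbound B hBκ Subtype.val (fun b => hBAA b.2)
    obtain ⟨hp1, hp2, hp3⟩ := hstage o ho
    have hBsub : B ⊆ myPrev A x₀ (o + 1) := by
      intro b hb; exact hp1 (hBo ⟨b, hb⟩)
    have := ((hF (myPrev A x₀ (o + 1))).2 hp2).2.1 B hBsub hBκ
    rw [← hchain (o + 1)] at this
    exact this.trans hp3
  have hAA_b : ∀ a ∈ AA, ∀ C ∈ 𝒞, a ∈ closure (AA ∩ C) := by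
    intro a ha C hC
    obtain ⟨o, ho, hao⟩ := hbound PUnit (by simp; exact one_le_aleph0.trans hκ)
      (fun _ => a) (fun _ => ha)
    obtain ⟨hp1, hp2, hp3⟩ := hstage o ho
    have := ((hF (myPrev A x₀ (o + 1))).2 hp2).2.2.1 a (hp1 (hao PUnit.unit)) C hC
    rw [← hchain (o + 1)] at this
    exact closure_mono (inter_subset_inter_left C hp3) this
  have hAAclosed : IsClosed AA := by
    rw [← closure_subset_iff_isClosed]
    intro y hy
    have hyC : y ∈ ⋃₀ 𝒞 := h𝒞cover ▸ mem_univ y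
    obtain ⟨C, hC, hyC⟩ := hyC
    have hsub : AA ⊆ closure (AA ∩ C) := fun a ha => hAA_b a ha C hC
    have hy2 : y ∈ closure (AA ∩ C) := by
      have := closure_mono hsub hy
      rwa [closure_closure] at this
    obtain ⟨B, hB1, hB2, hB3⟩ := h𝒞t C hC (AA ∩ C) inter_subset_right y hyC hy2
    exact hAA_a B (hB1.trans inter_subset_left) hB2 hB3
  -- final: AA = univ
  have hAAuniv : AA = Set.univ := by
    refine eq_univ_of_forall fun q => ?_
    by_contra hq
    have hVex : ∀ y : AA, ∃ Vy, Vy ∈ 𝒰 (y : X) ∧ q ∉ closure Vy := by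
      intro y
      by_contra hcon
      push_neg at hcon
      have : q ∈ ⋂ U ∈ 𝒰 (y : X), closure U := mem_iInter₂.2 fun U hU => hcon U hU
      rw [h𝒰int (y : X)] at this
      rw [mem_singleton_iff] at this
      exact hq (this ▸ y.2)
    choose V hV1 hV2 using hVex
    obtain ⟨𝒱', h𝒱'sub, h𝒱'κ, hcov⟩ := haL AA (range V) hAAclosed
      (by rintro _ ⟨y, rfl⟩; exact (h𝒰open _ _ (hV1 y)).1)
      (by intro a ha; exact ⟨V ⟨a, ha⟩, ⟨⟨a, ha⟩, rfl⟩, (h𝒰open _ _ (hV1 ⟨a, ha⟩)).2⟩)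
    have hqG : q ∉ ⋃ W ∈ 𝒱', closure W := by
      intro hqG
      obtain ⟨W, hW, hqW⟩ := mem_iUnion₂.1 hqG
      obtain ⟨y, rfl⟩ := h𝒱'sub hW
      exact hV2 y hqW
    choose yw hyw using fun W : 𝒱' => h𝒱'sub W.2
    obtain ⟨o, ho, hyo⟩ := hbound 𝒱' h𝒱'κ (fun W => (yw W : X)) (fun W => (yw W).2)
    obtain ⟨hp1, hp2, hp3⟩ := hstage o ho
    have hc := ((hF (myPrev A x₀ (o + 1))).2 hp2).2.2.2 𝒱'
      (by
        intro W hW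
        refine mem_iUnion₂.2 ⟨(yw ⟨W, hW⟩ : X), hp1 (hyo ⟨W, hW⟩), ?_⟩
        have h := hV1 (yw ⟨W, hW⟩)
        rwa [hyw ⟨W, hW⟩] at h)
      h𝒱'κ ⟨q, hqG⟩
    obtain ⟨p, hp, hpG⟩ := hc
    rw [← hchain (o + 1)] at hp
    exact hpG (hcov (hp3 hp))
  have : #(Set.univ : Set X) ≤ 2 ^ κ := hAAuniv ▸ hAAcard
  rwa [mk_univ] at this

lemma tightness_spec (Y : Type u) [TopologicalSpace Y] :
    ℵ₀ ≤ tightness Y ∧ ∀ (A : Set Y) (y : Y), y ∈ closure A →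
      ∃ B ⊆ A, #B ≤ tightness Y ∧ y ∈ closure B := by
  have hne : {τ : Cardinal.{u} | ℵ₀ ≤ τ ∧ ∀ (A : Set Y) (y : Y), y ∈ closure A →
      ∃ B ⊆ A, #B ≤ τ ∧ y ∈ closure B}.Nonempty := by
    refine ⟨max ℵ₀ #Y, le_max_left _ _, fun A y hy => ⟨A, subset_rfl, ?_, hy⟩⟩
    exact (mk_set_le A).trans (le_max_right _ _)
  exact csInf_mem hne

lemma tightness_trans {X : Type u} [TopologicalSpace X] {C : Set X} {κ : Cardinal.{u}}
    (hκ : tightness C ≤ κ) {A : Set X} (hA : A ⊆ C) {y : X} (hy : y ∈ C)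
    (hyc : y ∈ closure A) : ∃ B, B ⊆ A ∧ #B ≤ κ ∧ y ∈ closure B := by
  obtain ⟨-, hp⟩ := tightness_spec ↥C
  set A' : Set ↥C := Subtype.val ⁻¹' A with hA'
  have him : Subtype.val '' A' = A := by
    rw [hA', Subtype.image_preimage_coe, inter_eq_self_of_subset_right hA]
  have hy' : (⟨y, hy⟩ : ↥C) ∈ closure A' := by
    rw [closure_subtype, him]; exact hyc
  obtain ⟨B', hB'A, hB'κ, hyB'⟩ := hp A' ⟨y, hy⟩ hy'
  refine ⟨Subtype.val '' B', ?_, ?_, ?_⟩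
  · rintro _ ⟨b, hb, rfl⟩
    exact hB'A hb
  · exact mk_image_le.trans (hB'κ.trans hκ)
  · rw [closure_subtype] at hyB'
    exact hyB'

lemma aLc_spec (X : Type u) [TopologicalSpace X] :
    ℵ₀ ≤ almostLindelofDegreeClosed X ∧
    ∀ (F : Set X) (𝒱 : Set (Set X)), IsClosed F → (∀ V ∈ 𝒱, IsOpen V) → F ⊆ ⋃₀ 𝒱 →
      ∃ 𝒱' ⊆ 𝒱, #𝒱' ≤ almostLindelofDegreeClosed X ∧ F ⊆ ⋃ V ∈ 𝒱', closure V := by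
  have hne : {κ : Cardinal.{u} | ℵ₀ ≤ κ ∧ ∀ (F : Set X) (𝒱 : Set (Set X)), IsClosed F →
      (∀ V ∈ 𝒱, IsOpen V) → F ⊆ ⋃₀ 𝒱 →
      ∃ 𝒱' ⊆ 𝒱, #𝒱' ≤ κ ∧ F ⊆ ⋃ V ∈ 𝒱', closure V}.Nonempty := by
    refine ⟨max ℵ₀ #(Set X), le_max_left _ _, fun F 𝒱 _ _ hcov => ⟨𝒱, subset_rfl, ?_, ?_⟩⟩
    · exact (mk_set_le 𝒱).trans (le_max_right _ _)
    · refine hcov.trans ?_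
      rw [sUnion_eq_biUnion]
      exact iUnion₂_mono fun V _ => subset_closure
  exact csInf_mem hne

lemma cpsi_spec (X : Type u) [TopologicalSpace X] [T2Space X] :
    ℵ₀ ≤ closedPseudoCharacter X ∧
    ∀ x : X, ∃ 𝒰 : Set (Set X), #𝒰 ≤ closedPseudoCharacter X ∧
      (∀ U ∈ 𝒰, IsOpen U ∧ x ∈ U) ∧ ⋂ U ∈ 𝒰, closure U = {x} := by
  have hne : {κ : Cardinal.{u} | ℵ₀ ≤ κ ∧ ∀ x : X, ∃ 𝒰 : Set (Set X), #𝒰 ≤ κ ∧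
      (∀ U ∈ 𝒰, IsOpen U ∧ x ∈ U) ∧ ⋂ U ∈ 𝒰, closure U = {x}}.Nonempty := by
    refine ⟨max ℵ₀ #(Set X), le_max_left _ _, fun x =>
      ⟨{U : Set X | IsOpen U ∧ x ∈ U}, (mk_set_le _).trans (le_max_right _ _),
        fun U hU => hU, ?_⟩⟩
    apply subset_antisymm
    · intro y hy
      rw [mem_singleton_iff]
      by_contra hne
      obtain ⟨U, V, hU, hV, hxU, hyV, hUV⟩ := t2_separation (Ne.symm hne)
      have hycl : y ∈ closure U := mem_iInter₂.1 hy U ⟨hU, hxU⟩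
      have : closure U ⊆ Vᶜ :=
        closure_minimal (fun z hz => fun hzV => hUV.le_bot ⟨hz, hzV⟩) hV.isClosed_compl
      exact this hycl hyV
    · rintro y rfl
      exact mem_iInter₂.2 fun U hU => subset_closure hU.2
  exact csInf_mem hne

lemma wt_spec (X : Type u) [TopologicalSpace X] :
    ℵ₀ ≤ weakTightness X ∧
    ∃ 𝒞 : Set (Set X), IsWeakTightnessWitness X (weakTightness X) 𝒞 := by
  have hne : {κ : Cardinal.{u} | ℵ₀ ≤ κ ∧
      ∃ 𝒞 : Set (Set X), IsWeakTightnessWitness X κ 𝒞}.Nonempty := by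
    set κ₀ : Cardinal.{u} := max ℵ₀ #X with hκ₀
    have h1κ : (1 : Cardinal.{u}) ≤ 2 ^ κ₀ := by
      calc (1 : Cardinal.{u}) ≤ 2 := one_le_two
        _ = 2 ^ (1 : Cardinal.{u}) := (power_one 2).symm
        _ ≤ 2 ^ κ₀ := power_le_power_left two_ne_zero
            (le_trans (le_of_lt one_lt_aleph0) (le_max_left _ _))
    refine ⟨κ₀, le_max_left _ _, {Set.univ}, ?_, ?_, ?_⟩
    · exact sUnion_singleton _
    · rw [mk_singleton]
      exact h1κ
    · rintro C rfl
      constructor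
      · refine csInf_le' ⟨le_max_left _ _, fun A y _ => ⟨A, subset_rfl, ?_, ‹_›⟩⟩
        calc #A ≤ #(↥(Set.univ : Set X)) := mk_set_le A
          _ = #X := mk_univ
          _ ≤ κ₀ := le_max_right _ _
      · refine eq_univ_of_forall fun x => ?_
        refine mem_iUnion₂.2 ⟨{x}, ⟨subset_univ _, ?_⟩, subset_closure rfl⟩
        rw [mk_singleton]
        exact h1κ
  exact csInf_mem hne

/-- For a Hausdorff space `X`, `|X| ≤ 2^{aL_c(X)·wt(X)·ψ_c(X)}`. -/
theorem card_le_two_pow_almostLindelof_weakTightness_closedPsi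
    (X : Type u) [TopologicalSpace X] [T2Space X] :
    #X ≤ 2 ^ (almostLindelofDegreeClosed X * weakTightness X * closedPseudoCharacter X) := by
  by_cases hE : IsEmpty X
  · haveI := hE
    exact (Cardinal.mk_eq_zero X).le.trans zero_le
  · haveI : Nonempty X := not_isEmpty_iff.mp hE
    obtain ⟨haL0, haLp⟩ := aLc_spec X
    obtain ⟨hwt0, 𝒞, hwit⟩ := wt_spec X
    obtain ⟨h𝒞cov, h𝒞card, h𝒞props⟩ := hwit
    obtain ⟨hψ0, hψp⟩ := cpsi_spec X
    set a := almostLindelofDegreeClosed X with hadef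
    set w := weakTightness X with hwdef
    set p := closedPseudoCharacter X with hpdef
    set κ := a * w * p with hκdef
    have h1a : 1 ≤ a := one_lt_aleph0.le.trans haL0
    have h1w : 1 ≤ w := one_lt_aleph0.le.trans hwt0
    have h1p : 1 ≤ p := one_lt_aleph0.le.trans hψ0
    have ha : a ≤ κ :=
      calc a ≤ a * w := le_mul_of_one_le_right (zero_le : 0 ≤ a) h1w
        _ ≤ a * w * p := le_mul_of_one_le_right zero_le h1p
    have hw : w ≤ κ :=
      calc w ≤ a * w := le_mul_of_one_le_left (zero_le : 0 ≤ w) h1a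
        _ ≤ a * w * p := le_mul_of_one_le_right zero_le h1p
    have hp : p ≤ κ := le_mul_of_one_le_left (zero_le : 0 ≤ p)
      (h1a.trans (le_mul_of_one_le_right (zero_le : 0 ≤ a) h1w))
    have hκ : ℵ₀ ≤ κ := haL0.trans ha
    have h2 : (2 : Cardinal.{u}) ^ w ≤ 2 ^ κ := power_le_power_left two_ne_zero hw
    choose 𝒰₀ h0card h0open h0int using hψp
    set 𝒰 : X → Set (Set X) := fun x => insert Set.univ (𝒰₀ x) with h𝒰def
    have h𝒰card : ∀ x, #(𝒰 x) ≤ κ := by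
      intro x
      calc #(𝒰 x) ≤ #(𝒰₀ x) + 1 := mk_insert_le
        _ ≤ κ + 1 := add_le_add_left ((h0card x).trans hp) _
        _ = κ := add_one_eq hκ
    have h𝒰open : ∀ x, ∀ U ∈ 𝒰 x, IsOpen U ∧ x ∈ U := by
      intro x U hU
      rcases hU with rfl | hU
      exacts [⟨isOpen_univ, mem_univ x⟩, h0open x U hU]
    have h𝒰int : ∀ x, ⋂ U ∈ 𝒰 x, closure U = {x} := by
      intro x
      rw [h𝒰def]
      rw [Set.biInter_insert, closure_univ, h0int x, univ_inter]
    have h𝒰ne : ∀ x, (𝒰 x).Nonempty := fun x => insert_nonempty _ _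
    have h𝒞card' : #𝒞 ≤ 2 ^ κ := h𝒞card.trans h2
    have h𝒞t : ∀ C ∈ 𝒞, ∀ A : Set X, A ⊆ C → ∀ y ∈ C, y ∈ closure A →
        ∃ B, B ⊆ A ∧ #B ≤ κ ∧ y ∈ closure B :=
      fun C hC A hA y hy hyc => tightness_trans ((h𝒞props C hC).1.trans hw) hA hy hyc
    have h𝒞dense : ∀ C ∈ 𝒞, ∀ x : X, ∃ B, B ⊆ C ∧ #B ≤ 2 ^ κ ∧ x ∈ closure B := by
      intro C hC x
      have hx : x ∈ kClosure (2 ^ w) C := by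
        rw [(h𝒞props C hC).2]; exact mem_univ x
      rw [kClosure] at hx
      obtain ⟨B, hB, hxB⟩ := mem_iUnion₂.1 hx
      exact ⟨B, hB.1, hB.2.trans h2, hxB⟩
    have haL' : ∀ (F : Set X) (𝒱 : Set (Set X)), IsClosed F → (∀ V ∈ 𝒱, IsOpen V) →
        F ⊆ ⋃₀ 𝒱 → ∃ 𝒱' ⊆ 𝒱, #𝒱' ≤ κ ∧ F ⊆ ⋃ V ∈ 𝒱', closure V := by
      intro F 𝒱 h1 h2' h3
      obtain ⟨𝒱', hs, hc, hcov⟩ := haLp F 𝒱 h1 h2' h3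
      exact ⟨𝒱', hs, hc.trans ha, hcov⟩
    exact myMain κ hκ 𝒰 h𝒰card h𝒰open h𝒰int h𝒰ne 𝒞 h𝒞cov h𝒞card' h𝒞t h𝒞dense haL'

end
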